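/- arXiv:2212.05756 — 3 statements merged into one kernel-verified Lean document; each statement's English description precedes it below -/
import Mathlib

section
/- Let s be a real polynomial that is non-negative for all non-negative real x. Then there exist real polynomials a1, a2, a3, a4 with deg a1, deg a2 ≤ deg s and deg a3, deg a4 ≤ deg s − 1 such that s(x) = a1(x)^2 + a2(x)^2 + x·(a3(x)^2 + a4(x)^2) for all real x. -/
open Polynomial

/-- Coefficient of a square at twice an upper bound for the degree. -/
private lemma PS_coeff_sq (f : Polynomial ℝ) (d : ℕ) (hf : f.natDegree ≤ d) :
    (f ^ 2).coeff (2 * d) = (f.coeff d) ^ 2 := by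
  rw [sq, Polynomial.coeff_mul, sq]
  refine Finset.sum_eq_single (d, d) ?_ ?_
  · intro b hb hne
    rw [Finset.HasAntidiagonal.mem_antidiagonal] at hb
    rcases lt_or_ge d b.1 with h | h
    · rw [Polynomial.coeff_eq_zero_of_natDegree_lt (lt_of_le_of_lt hf h), zero_mul]
    · rcases lt_or_ge d b.2 with h2 | h2
      · rw [Polynomial.coeff_eq_zero_of_natDegree_lt (lt_of_le_of_lt hf h2), mul_zero]
      · exfalso; apply hne
        have hb1 : b.1 = d := by omega
        have hb2 : b.2 = d := by omega
        exact Prod.ext hb1 hb2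
  · intro h
    exfalso; apply h
    simp [Finset.mem_antidiagonal, two_mul]

/-- Degree bound for a decomposition into a sum of two squares. -/
private lemma PS_deg_bound {f g p : Polynomial ℝ} (h : p = f ^ 2 + g ^ 2) :
    2 * f.natDegree ≤ p.natDegree ∧ 2 * g.natDegree ≤ p.natDegree := by
  by_cases hfg : f = 0 ∧ g = 0
  · simp [hfg.1, hfg.2]
  · set d := max f.natDegree g.natDegree with hd
    have hfd : f.natDegree ≤ d := le_max_left _ _
    have hgd : g.natDegree ≤ d := le_max_right _ _
    have hcoeff : p.coeff (2 * d) = (f.coeff d) ^ 2 + (g.coeff d) ^ 2 := by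
      rw [h, Polynomial.coeff_add, PS_coeff_sq f d hfd, PS_coeff_sq g d hgd]
    have hne : f.coeff d ≠ 0 ∨ g.coeff d ≠ 0 := by
      rcases le_total g.natDegree f.natDegree with hle | hle
      · have hdf : d = f.natDegree := by omega
        by_cases hf0 : f = 0
        · right
          have hg0 : g ≠ 0 := fun h' => hfg ⟨hf0, h'⟩
          have : d = g.natDegree := by
            simp [hf0] at hdf; omega
          rw [this]
          exact Polynomial.coeff_ne_zero_of_eq_degree (Polynomial.degree_eq_natDegree hg0)
        · left; rw [hdf]
          exact Polynomial.coeff_ne_zero_of_eq_degree (Polynomial.degree_eq_natDegree hf0)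
      · have hdg : d = g.natDegree := by omega
        by_cases hg0 : g = 0
        · left
          have hf0 : f ≠ 0 := fun h' => hfg ⟨h', hg0⟩
          have : d = f.natDegree := by
            simp [hg0] at hdg; omega
          rw [this]
          exact Polynomial.coeff_ne_zero_of_eq_degree (Polynomial.degree_eq_natDegree hf0)
        · right; rw [hdg]
          exact Polynomial.coeff_ne_zero_of_eq_degree (Polynomial.degree_eq_natDegree hg0)
    have hpos : p.coeff (2 * d) ≠ 0 := by
      rw [hcoeff]
      rcases hne with h' | h'
      · positivity
      · positivity
    have h2d : 2 * d ≤ p.natDegree := Polynomial.le_natDegree_of_ne_zero hpos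
    omega

/-- A real polynomial nonnegative wherever another nonzero polynomial `q` does not vanish,
is nonnegative everywhere. -/
private lemma PS_nonneg_of_dense {t q : Polynomial ℝ} (hq : q ≠ 0)
    (h : ∀ x : ℝ, q.eval x ≠ 0 → 0 ≤ t.eval x) : ∀ x : ℝ, 0 ≤ t.eval x := by
  have hdense : Dense {x : ℝ | q.eval x ≠ 0} := by
    have hfin : Set.Finite {x : ℝ | q.IsRoot x} := Polynomial.finite_setOf_isRoot hq
    have := hfin.countable.dense_compl ℝ
    convert this using 1
    ext x
    rfl
  have hclosed : IsClosed {x : ℝ | 0 ≤ t.eval x} := by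
    have : Continuous fun x : ℝ => t.eval x := t.continuous
    exact isClosed_le continuous_const this
  intro x
  have hsub : {x : ℝ | q.eval x ≠ 0} ⊆ {x : ℝ | 0 ≤ t.eval x} := fun y hy => h y hy
  have : (Set.univ : Set ℝ) ⊆ {x : ℝ | 0 ≤ t.eval x} := by
    rw [← hclosed.closure_eq]
    intro y _
    exact closure_mono hsub (hdense y)
  exact this (Set.mem_univ x)

/-- Pólya–Szegő key step: a real polynomial nonnegative on all of `ℝ`
is a sum of two squares of real polynomials. -/
private lemma PS_sum_two_squares (p : Polynomial ℝ) (hp : ∀ x : ℝ, 0 ≤ p.eval x) :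
    ∃ f g : Polynomial ℝ, p = f ^ 2 + g ^ 2 := by
  suffices H : ∀ n : ℕ, ∀ p : Polynomial ℝ, p.natDegree = n → (∀ x : ℝ, 0 ≤ p.eval x) →
      ∃ f g : Polynomial ℝ, p = f ^ 2 + g ^ 2 from H p.natDegree p rfl hp
  intro n
  induction n using Nat.strong_induction_on with
  | _ n ih =>
    intro p hn hp
    rcases Nat.eq_zero_or_pos n with h0 | h1
    · subst h0
      refine ⟨Polynomial.C (Real.sqrt (p.coeff 0)), 0, ?_⟩
      have hc : 0 ≤ p.coeff 0 := by
        rw [Polynomial.coeff_zero_eq_eval_zero]; exact hp 0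
      have hC := Polynomial.eq_C_of_natDegree_eq_zero hn
      conv_lhs => rw [hC]
      rw [← Polynomial.C_pow, Real.sq_sqrt hc]
      ring
    · -- p is nonconstant, hence nonzero
      have hp0 : p ≠ 0 := by
        intro h; rw [h] at hn; simp at hn; omega
      -- get a complex root
      have hdegmap : (p.map (algebraMap ℝ ℂ)).degree = p.degree :=
        Polynomial.degree_map_eq_of_injective (algebraMap ℝ ℂ).injective p
      have hdegpos : 0 < (p.map (algebraMap ℝ ℂ)).degree := by
        rw [hdegmap, Polynomial.degree_eq_natDegree hp0, hn]
        exact_mod_cast h1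
      obtain ⟨z, hz⟩ := Complex.exists_root hdegpos
      -- in both cases we find a factorization p = ((X - C r)^2 + C c ^ 2) * t
      have hmain : ∃ r c : ℝ, ∃ t : Polynomial ℝ,
          p = ((Polynomial.X - Polynomial.C r) ^ 2 + Polynomial.C c ^ 2) * t := by
        by_cases him : z.im = 0
        · -- real root case
          set r := z.re with hr
          have hroot : p.eval r = 0 := by
            have hzr : (algebraMap ℝ ℂ) r = z := by
              rw [Complex.coe_algebraMap]
              exact Complex.ext rfl (by simp [him])
            have h0 : (p.map (algebraMap ℝ ℂ)).eval ((algebraMap ℝ ℂ) r) = 0 := by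
              rw [hzr]; exact hz
            rw [Polynomial.eval_map, Polynomial.eval₂_at_apply] at h0
            rw [Complex.coe_algebraMap] at h0
            exact_mod_cast h0
          obtain ⟨q1, hq1⟩ := (Polynomial.dvd_iff_isRoot.mpr hroot)
          -- derivative vanishes at the minimum r
          have hder : p.derivative.eval r = 0 := by
            have hmin : IsLocalMin (fun x : ℝ => p.eval x) r := by
              apply Filter.Eventually.of_forall
              intro x
              simp only [hroot]
              exact hp x
            have hdiff : DifferentiableAt ℝ (fun x : ℝ => p.eval x) r :=
              (p.differentiable).differentiableAt
            have := hmin.deriv_eq_zero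
            rwa [Polynomial.deriv] at this
          have hq1r : q1.eval r = 0 := by
            have hd : p.derivative =
                q1 + (Polynomial.X - Polynomial.C r) * q1.derivative := by
              rw [hq1, Polynomial.derivative_mul]
              simp
            have := hder
            rw [hd] at this
            simpa using this
          obtain ⟨t, ht⟩ := (Polynomial.dvd_iff_isRoot.mpr hq1r)
          refine ⟨r, 0, t, ?_⟩
          rw [hq1, ht, map_zero]
          ring
        · -- nonreal root case: (X - z)(X - conj z) divides p over ℂ
          set q : Polynomial ℝ :=
            (Polynomial.X - Polynomial.C z.re) ^ 2 + Polynomial.C z.im ^ 2 with hqdef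
          have hqmap : q.map (algebraMap ℝ ℂ) =
              (Polynomial.X - Polynomial.C z) *
                (Polynomial.X - Polynomial.C ((starRingEnd ℂ) z)) := by
            apply Polynomial.funext
            intro w
            simp only [hqdef, Polynomial.eval_map, Polynomial.eval₂_add,
              Polynomial.eval₂_pow, Polynomial.eval₂_sub, Polynomial.eval₂_X,
              Polynomial.eval₂_C, Polynomial.eval_mul, Polynomial.eval_sub,
              Polynomial.eval_X, Polynomial.eval_C]
            have hz1 : (z : ℂ) = (z.re : ℂ) + (z.im : ℂ) * Complex.I :=
              (Complex.re_add_im z).symm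
            have hz2 : (starRingEnd ℂ) z = (z.re : ℂ) - (z.im : ℂ) * Complex.I := by
              apply Complex.ext <;> simp
            rw [Complex.coe_algebraMap]
            calc (w - (z.re : ℂ)) ^ 2 + ((z.im : ℝ) : ℂ) ^ 2
                = (w - ((z.re : ℂ) + (z.im : ℂ) * Complex.I)) *
                    (w - ((z.re : ℂ) - (z.im : ℂ) * Complex.I)) := by
                  linear_combination ((z.im : ℂ) ^ 2) * Complex.I_sq
              _ = (w - z) * (w - (starRingEnd ℂ) z) := by rw [← hz1, ← hz2]
          have hdvd1 : (Polynomial.X - Polynomial.C z) ∣ p.map (algebraMap ℝ ℂ) :=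
            Polynomial.dvd_iff_isRoot.mpr hz
          have hconjroot : (p.map (algebraMap ℝ ℂ)).IsRoot ((starRingEnd ℂ) z) := by
            unfold Polynomial.IsRoot
            rw [Polynomial.eval_map]
            have hcomp : (starRingEnd ℂ).comp (algebraMap ℝ ℂ) = algebraMap ℝ ℂ := by
              ext r; simp [Complex.conj_ofReal]
            have := Polynomial.hom_eval₂ p (algebraMap ℝ ℂ) (starRingEnd ℂ) z
            rw [hcomp] at this
            rw [← this]
            have hz0 : Polynomial.eval₂ (algebraMap ℝ ℂ) z p = 0 := by
              rwa [Polynomial.IsRoot, Polynomial.eval_map] at hz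
            rw [hz0, map_zero]
          have hdvd2 : (Polynomial.X - Polynomial.C ((starRingEnd ℂ) z)) ∣
              p.map (algebraMap ℝ ℂ) := Polynomial.dvd_iff_isRoot.mpr hconjroot
          have hne : z ≠ (starRingEnd ℂ) z := by
            intro h
            exact him (Complex.conj_eq_iff_im.mp h.symm)
          have hco : IsCoprime (Polynomial.X - Polynomial.C z)
              (Polynomial.X - Polynomial.C ((starRingEnd ℂ) z)) :=
            Polynomial.isCoprime_X_sub_C_of_isUnit_sub ((sub_ne_zero.mpr hne).isUnit)
          have hmul : q.map (algebraMap ℝ ℂ) ∣ p.map (algebraMap ℝ ℂ) := by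
            rw [hqmap]
            exact hco.mul_dvd hdvd1 hdvd2
          have hqdvd : q ∣ p := (Polynomial.map_dvd_map' (algebraMap ℝ ℂ)).mp hmul
          obtain ⟨t, ht⟩ := hqdvd
          exact ⟨z.re, z.im, t, ht⟩
      obtain ⟨r, c, t, hfact⟩ := hmain
      set q : Polynomial ℝ :=
        (Polynomial.X - Polynomial.C r) ^ 2 + Polynomial.C c ^ 2 with hqdef
      have h2 : ((Polynomial.X - Polynomial.C r) ^ 2 : Polynomial ℝ).degree = 2 := by
        rw [Polynomial.degree_pow, Polynomial.degree_X_sub_C]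
        rfl
      have hCle : (Polynomial.C c ^ 2 : Polynomial ℝ).degree ≤ 0 := by
        rw [← Polynomial.C_pow]; exact Polynomial.degree_C_le
      have hlt : (Polynomial.C c ^ 2 : Polynomial ℝ).degree <
          ((Polynomial.X - Polynomial.C r) ^ 2 : Polynomial ℝ).degree := by
        rw [h2]
        exact lt_of_le_of_lt hCle (by norm_num)
      have hqdeg : q.degree = 2 := by
        rw [hqdef, Polynomial.degree_add_eq_left_of_degree_lt hlt, h2]
      have hqmonic : q.Monic := by
        rw [hqdef]
        exact Polynomial.Monic.add_of_left ((Polynomial.monic_X_sub_C r).pow 2) hlt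
      have hq0 : q ≠ 0 := hqmonic.ne_zero
      have ht0 : t ≠ 0 := by
        intro h; rw [h, mul_zero] at hfact; exact hp0 hfact
      have hqnat : q.natDegree = 2 := Polynomial.natDegree_eq_of_degree_eq_some hqdeg
      have hdegt : t.natDegree = n - 2 ∧ 2 ≤ n := by
        have := Polynomial.Monic.natDegree_mul' hqmonic ht0
        rw [← hfact, hn, hqnat] at this
        omega
      have hqev : ∀ x : ℝ, q.eval x = (x - r) ^ 2 + c ^ 2 := by
        intro x; simp [hqdef]
      have htnn : ∀ x : ℝ, 0 ≤ t.eval x := by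
        apply PS_nonneg_of_dense hq0
        intro x hx
        have hqpos : 0 < q.eval x := by
          rcases lt_or_eq_of_le (by rw [hqev x]; positivity : (0:ℝ) ≤ q.eval x) with h | h
          · exact h
          · exact absurd h.symm hx
        have hpx : 0 ≤ q.eval x * t.eval x := by
          have := hp x
          rwa [hfact, Polynomial.eval_mul] at this
        nlinarith
      obtain ⟨f, g, hfg⟩ := ih (n - 2) (by omega) t hdegt.1 htnn
      refine ⟨(Polynomial.X - Polynomial.C r) * f - Polynomial.C c * g,
        (Polynomial.X - Polynomial.C r) * g + Polynomial.C c * f, ?_⟩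
      rw [hfact, hfg, hqdef]
      ring

/-- Even/odd decomposition of a real polynomial under evaluation. -/
private lemma PS_even_odd (f : Polynomial ℝ) :
    ∃ E O : Polynomial ℝ, E.natDegree ≤ f.natDegree / 2 ∧ O.natDegree ≤ f.natDegree / 2 ∧
      ∀ x : ℝ, f.eval x = E.eval (x ^ 2) + x * O.eval (x ^ 2) := by
  suffices H : ∀ n : ℕ, ∀ f : Polynomial ℝ, f.natDegree ≤ n →
      ∃ E O : Polynomial ℝ, E.natDegree ≤ n / 2 ∧ O.natDegree ≤ n / 2 ∧
        ∀ x : ℝ, f.eval x = E.eval (x ^ 2) + x * O.eval (x ^ 2) from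
    H f.natDegree f le_rfl
  intro n
  induction n using Nat.strong_induction_on with
  | _ n ih =>
    intro f hf
    rcases le_or_gt n 1 with hn1 | hn1
    · -- base case: f is linear
      have hf1 : f.natDegree ≤ 1 := le_trans hf hn1
      refine ⟨Polynomial.C (f.coeff 0), Polynomial.C (f.coeff 1), by simp, by simp, ?_⟩
      intro x
      conv_lhs => rw [Polynomial.eq_X_add_C_of_natDegree_le_one hf1]
      simp
      ring
    · -- inductive step
      set g := f.divX.divX with hg
      have hgdeg : g.natDegree ≤ n - 2 := by
        have h1 : f.divX.natDegree = f.natDegree - 1 :=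
          Polynomial.natDegree_divX_eq_natDegree_tsub_one
        have h2 : g.natDegree = f.divX.natDegree - 1 :=
          Polynomial.natDegree_divX_eq_natDegree_tsub_one
        omega
      obtain ⟨E1, O1, hE1, hO1, hev⟩ := ih (n - 2) (by omega) g hgdeg
      have hfdec : ∀ x : ℝ, f.eval x = f.coeff 0 + f.coeff 1 * x + x ^ 2 * g.eval x := by
        intro x
        have h01 : f.divX.coeff 0 = f.coeff 1 := Polynomial.coeff_divX
        conv_lhs => rw [← Polynomial.X_mul_divX_add f, ← Polynomial.X_mul_divX_add f.divX]
        simp [← hg, h01]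
        ring
      refine ⟨Polynomial.C (f.coeff 0) + Polynomial.X * E1,
        Polynomial.C (f.coeff 1) + Polynomial.X * O1, ?_, ?_, ?_⟩
      · calc (Polynomial.C (f.coeff 0) + Polynomial.X * E1).natDegree
            ≤ max (Polynomial.C (f.coeff 0)).natDegree (Polynomial.X * E1).natDegree :=
              Polynomial.natDegree_add_le _ _
          _ ≤ n / 2 := by
              have h1 : (Polynomial.X * E1 : Polynomial ℝ).natDegree ≤ 1 + E1.natDegree := by
                calc (Polynomial.X * E1 : Polynomial ℝ).natDegree
                    ≤ (Polynomial.X : Polynomial ℝ).natDegree + E1.natDegree :=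
                      Polynomial.natDegree_mul_le
                  _ ≤ 1 + E1.natDegree := by rw [Polynomial.natDegree_X]
              simp only [Polynomial.natDegree_C]
              omega
      · calc (Polynomial.C (f.coeff 1) + Polynomial.X * O1).natDegree
            ≤ max (Polynomial.C (f.coeff 1)).natDegree (Polynomial.X * O1).natDegree :=
              Polynomial.natDegree_add_le _ _
          _ ≤ n / 2 := by
              have h1 : (Polynomial.X * O1 : Polynomial ℝ).natDegree ≤ 1 + O1.natDegree := by
                calc (Polynomial.X * O1 : Polynomial ℝ).natDegree
                    ≤ (Polynomial.X : Polynomial ℝ).natDegree + O1.natDegree :=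
                      Polynomial.natDegree_mul_le
                  _ ≤ 1 + O1.natDegree := by rw [Polynomial.natDegree_X]
              simp only [Polynomial.natDegree_C]
              omega
      · intro x
        rw [hfdec x, hev x]
        simp
        ring

/-- Pólya–Szegő: a real polynomial non-negative on `[0,∞)` is of the form
`a1² + a2² + X·(a3² + a4²)` with degree bounds. -/
theorem polya_szego_representation (s : Polynomial ℝ)
    (hs : ∀ x : ℝ, 0 ≤ x → 0 ≤ s.eval x) :
    ∃ a1 a2 a3 a4 : Polynomial ℝ,
      a1.natDegree ≤ s.natDegree ∧ a2.natDegree ≤ s.natDegree ∧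
      a3.natDegree ≤ s.natDegree - 1 ∧ a4.natDegree ≤ s.natDegree - 1 ∧
      ∀ x : ℝ, s.eval x =
        (a1.eval x) ^ 2 + (a2.eval x) ^ 2 +
          x * ((a3.eval x) ^ 2 + (a4.eval x) ^ 2) := by
  set n := s.natDegree with hns
  set p := s.comp (Polynomial.X ^ 2) with hpdef
  have hpev : ∀ x : ℝ, p.eval x = s.eval (x ^ 2) := by
    intro x; simp [hpdef, Polynomial.eval_comp]
  have hpnn : ∀ x : ℝ, 0 ≤ p.eval x := by
    intro x; rw [hpev]; exact hs _ (sq_nonneg x)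
  obtain ⟨f, g, hfg⟩ := PS_sum_two_squares p hpnn
  have hpdeg : p.natDegree = 2 * n := by
    rw [hpdef, Polynomial.natDegree_comp, Polynomial.natDegree_X_pow]
    ring
  obtain ⟨hfb, hgb⟩ := PS_deg_bound hfg
  have hfn : f.natDegree ≤ n := by omega
  have hgn : g.natDegree ≤ n := by omega
  obtain ⟨Ef, Of, hEf, hOf, hevf⟩ := PS_even_odd f
  obtain ⟨Eg, Og, hEg, hOg, hevg⟩ := PS_even_odd g
  refine ⟨Ef, Eg, Of, Og, ?_, ?_, ?_, ?_, ?_⟩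
  · calc Ef.natDegree ≤ f.natDegree / 2 := hEf
      _ ≤ n := by omega
  · calc Eg.natDegree ≤ g.natDegree / 2 := hEg
      _ ≤ n := by omega
  · calc Of.natDegree ≤ f.natDegree / 2 := hOf
      _ ≤ n - 1 := by omega
  · calc Og.natDegree ≤ g.natDegree / 2 := hOg
      _ ≤ n - 1 := by omega
  · -- prove the evaluation identity, first on nonnegative reals
    have hkey : ∀ y : ℝ, 0 ≤ y → s.eval y =
        (Ef.eval y) ^ 2 + (Eg.eval y) ^ 2 +
          y * ((Of.eval y) ^ 2 + (Og.eval y) ^ 2) := by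
      intro y hy
      set x := Real.sqrt y with hx
      have hx2 : x ^ 2 = y := Real.sq_sqrt hy
      have h1 : s.eval y = (f.eval x) ^ 2 + (g.eval x) ^ 2 := by
        rw [← hx2, ← hpev x, hfg]; simp
      have h2 : s.eval y = (f.eval (-x)) ^ 2 + (g.eval (-x)) ^ 2 := by
        have : (-x) ^ 2 = y := by rw [neg_pow]; simp [hx2]
        rw [← this, ← hpev (-x), hfg]; simp
      have hf1 : f.eval x = Ef.eval y + x * Of.eval y := by rw [← hx2]; exact hevf x
      have hf2 : f.eval (-x) = Ef.eval y - x * Of.eval y := by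
        have h := hevf (-x)
        rw [show (-x) ^ 2 = y by rw [neg_pow]; simp [hx2]] at h
        rw [h]; ring
      have hg1 : g.eval x = Eg.eval y + x * Og.eval y := by rw [← hx2]; exact hevg x
      have hg2 : g.eval (-x) = Eg.eval y - x * Og.eval y := by
        have h := hevg (-x)
        rw [show (-x) ^ 2 = y by rw [neg_pow]; simp [hx2]] at h
        rw [h]; ring
      rw [hf1, hg1] at h1
      rw [hf2, hg2] at h2
      nlinarith [h1, h2, hx2]
    -- extend to all reals via infinitude of agreement set
    have hpoly : s = Ef ^ 2 + Eg ^ 2 + Polynomial.X * (Of ^ 2 + Og ^ 2) := by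
      apply Polynomial.eq_of_infinite_eval_eq
      apply Set.Infinite.mono (s := Set.Ici (0 : ℝ))
      · intro y hy
        simp only [Set.mem_setOf_eq, Polynomial.eval_add, Polynomial.eval_mul,
          Polynomial.eval_pow, Polynomial.eval_X]
        rw [hkey y hy]
      · exact Set.Ici_infinite 0
    intro x
    rw [hpoly]
    simp
end

section
/- Let s be a real polynomial with s(x) ≥ 0 for all x ∈ ℝ. Then there exist real polynomials a1, a2 such that s(x) = a1(x)^2 + a2(x)^2 for all real x. -/
open Polynomial Filter Topology

private lemma nonneg_of_nonneg_ne (t : Polynomial ℝ) (r : ℝ)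
    (h : ∀ x : ℝ, x ≠ r → 0 ≤ t.eval x) : ∀ x : ℝ, 0 ≤ t.eval x := by
  intro x
  have hc : Filter.Tendsto t.eval (𝓝[≠] x) (𝓝 (t.eval x)) :=
    (t.continuous_aeval.tendsto x).mono_left nhdsWithin_le_nhds
  refine ge_of_tendsto hc ?_
  by_cases hx : x = r
  · filter_upwards [self_mem_nhdsWithin] with y hy
    exact h y (by simpa [hx] using hy)
  · have : {y : ℝ | y ≠ r} ∈ 𝓝[≠] x :=
      nhdsWithin_le_nhds (isOpen_compl_singleton.mem_nhds hx)
    filter_upwards [this] with y hy using h y hy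

private lemma key (n : ℕ) : ∀ s : Polynomial ℝ, s.natDegree ≤ n →
    (∀ x : ℝ, 0 ≤ s.eval x) → ∃ a b : Polynomial ℝ, s = a ^ 2 + b ^ 2 := by
  induction n using Nat.strong_induction_on with
  | _ n ih =>
  intro s hdeg hs
  rcases eq_or_ne s 0 with rfl | hs0
  · exact ⟨0, 0, by ring⟩
  rcases Nat.eq_zero_or_pos s.natDegree with h0 | hpos
  · obtain ⟨c, rfl⟩ := Polynomial.natDegree_eq_zero.mp h0
    have hc : 0 ≤ c := by simpa using hs 0
    exact ⟨C (Real.sqrt c), 0, by simp [← C_pow, Real.sq_sqrt hc]⟩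
  · obtain ⟨z, hz⟩ : ∃ z : ℂ, aeval z s = 0 := by
      apply IsAlgClosed.exists_aeval_eq_zero ℂ s
      simpa [Polynomial.degree_eq_natDegree hs0] using hpos.ne'
    -- q ∣ s with q := (X - C z.re)^2 + C (z.im^2)
    set r := z.re with hr
    set q : Polynomial ℝ := (X - C r) ^ 2 + C (z.im ^ 2) with hqdef
    have hq : q ∣ s := by
      rcases eq_or_ne z.im 0 with him | him
      · -- real root
        have hroot : s.eval r = 0 := by
          have hzr : (z : ℂ) = (r : ℂ) := by
            apply Complex.ext <;> simp [hr, him]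
          have h2 : aeval ((algebraMap ℝ ℂ) r) s = 0 := by rwa [hzr] at hz
          rw [aeval_algebraMap_apply] at h2
          simpa using h2
        obtain ⟨t, ht⟩ := (dvd_iff_isRoot.mpr hroot : X - C r ∣ s)
        have htr : t.eval r = 0 := by
          have hpt : ∀ x : ℝ, r < x → 0 ≤ t.eval x := by
            intro x hx
            have := hs x
            rw [ht] at this
            simp only [eval_mul, eval_sub, eval_X, eval_C] at this
            rw [mul_comm] at this
            exact nonneg_of_mul_nonneg_left this (by linarith)
          have hnt : ∀ x : ℝ, x < r → t.eval x ≤ 0 := by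
            intro x hx
            have := hs x
            rw [ht] at this
            simp only [eval_mul, eval_sub, eval_X, eval_C] at this
            nlinarith
          have hc1 : Filter.Tendsto t.eval (𝓝[>] r) (𝓝 (t.eval r)) :=
            (t.continuous_aeval.tendsto r).mono_left nhdsWithin_le_nhds
          have hc2 : Filter.Tendsto t.eval (𝓝[<] r) (𝓝 (t.eval r)) :=
            (t.continuous_aeval.tendsto r).mono_left nhdsWithin_le_nhds
          have h1 : 0 ≤ t.eval r := ge_of_tendsto hc1
            (by filter_upwards [self_mem_nhdsWithin] with y hy using hpt y hy)
          have h2 : t.eval r ≤ 0 := le_of_tendsto hc2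
            (by filter_upwards [self_mem_nhdsWithin] with y hy using hnt y hy)
          linarith
        obtain ⟨u, hu⟩ := (dvd_iff_isRoot.mpr htr : X - C r ∣ t)
        refine ⟨u, ?_⟩
        rw [hqdef, him, ht, hu]
        have h02 : (0:ℝ) ^ 2 = 0 := by norm_num
        rw [h02, map_zero]; ring
      · have := Polynomial.quadratic_dvd_of_aeval_eq_zero_im_ne_zero s hz him
        have hq2 : q = X ^ 2 - C (2 * z.re) * X + C (‖z‖ ^ 2) := by
          rw [hqdef]
          have hn : ‖z‖ ^ 2 = z.re ^ 2 + z.im ^ 2 := by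
            rw [Complex.sq_norm, Complex.normSq_apply]; ring
          rw [hn, hr]
          simp only [C_add, C_mul, C_pow, map_ofNat]
          ring
        rw [hq2]; exact this
    obtain ⟨t, ht⟩ := hq
    have hqmonic : q.Monic := by
      apply Polynomial.Monic.add_of_left ((monic_X_sub_C r).pow 2)
      calc degree (C (z.im ^ 2)) ≤ 0 := degree_C_le
        _ < 2 := by norm_num
        _ = degree ((X - C r) ^ 2) := by
          rw [Polynomial.degree_pow, Polynomial.degree_X_sub_C]; rfl
    have hqdeg : q.natDegree = 2 := by
      apply natDegree_eq_of_degree_eq_some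
      rw [hqdef, degree_add_eq_left_of_degree_lt, degree_pow, degree_X_sub_C]
      · rfl
      · calc degree (C (z.im ^ 2)) ≤ 0 := degree_C_le
          _ < degree ((X - C r) ^ 2) := by
            rw [degree_pow, degree_X_sub_C]; norm_num
    have hqx : ∀ x : ℝ, q.eval x = (x - r) ^ 2 + z.im ^ 2 := by
      intro x; simp [hqdef]
    have ht0 : t ≠ 0 := by rintro rfl; simp at ht; exact hs0 (by simp [ht])
    have hsdeg : s.natDegree = 2 + t.natDegree := by
      rw [ht, Polynomial.natDegree_mul hqmonic.ne_zero ht0, hqdeg]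
    -- t is nonnegative
    have htnn : ∀ x : ℝ, 0 ≤ t.eval x := by
      apply nonneg_of_nonneg_ne t r
      intro x hx
      have hqpos : 0 < q.eval x := by
        rw [hqx]
        have hne : x - r ≠ 0 := sub_ne_zero.mpr hx
        have h2 : 0 < (x - r) ^ 2 := by positivity
        nlinarith [sq_nonneg z.im]
      have := hs x
      rw [ht, eval_mul, mul_comm] at this
      exact nonneg_of_mul_nonneg_left this hqpos
    obtain ⟨a, b, hab⟩ := ih (n - 1) (by omega) t (by omega) htnn
    refine ⟨(X - C r) * a - C z.im * b, (X - C r) * b + C z.im * a, ?_⟩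
    rw [ht, hab, hqdef, C_pow]; ring

/-- A real polynomial non-negative on all of `ℝ` is a sum of two squares of polynomials. -/
theorem nonneg_poly_sum_two_squares (s : Polynomial ℝ)
    (hs : ∀ x : ℝ, 0 ≤ s.eval x) :
    ∃ a1 a2 : Polynomial ℝ, ∀ x : ℝ,
      s.eval x = (a1.eval x) ^ 2 + (a2.eval x) ^ 2 := by
  obtain ⟨a, b, hab⟩ := key s.natDegree s le_rfl hs
  exact ⟨a, b, fun x => by rw [hab]; simp⟩
end

section
/- Let z be a complex number with nonzero imaginary part and negative real part, and let x be real. Then (1 − x/z)·(1 − x/conj(z)) = ((x − max(Re z, 0))^2 + (min(Re z, 0))^2 + (Im z)^2)/|z|^2 + x·(−2·min(Re z, 0)/|z|^2), and both the constant-in-x expressions ((x − max(Re z,0))^2 + (min(Re z,0))^2 + (Im z)^2)/|z|^2 and −2·min(Re z,0)/|z|^2 are non-negative for all real x. -/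
open Complex

/-- Rewriting a conjugate pair of linear factors with `Re z < 0` in the form
`b1(x) + x·b2(x)` with `b1, b2` pointwise non-negative. -/
theorem conj_pair_factor_decomposition (z : ℂ) (hz : z.im ≠ 0) (hre : z.re < 0)
    (x : ℝ) :
    (1 - (x : ℂ) / z) * (1 - (x : ℂ) / (starRingEnd ℂ z)) =
      ((((x - max z.re 0) ^ 2 + (min z.re 0) ^ 2 + z.im ^ 2) / Complex.normSq z : ℝ) : ℂ) +
        (x : ℂ) * (((-2 * min z.re 0 / Complex.normSq z : ℝ)) : ℂ) ∧
    0 ≤ ((x - max z.re 0) ^ 2 + (min z.re 0) ^ 2 + z.im ^ 2) / Complex.normSq z ∧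
    0 ≤ -2 * min z.re 0 / Complex.normSq z := by
  have hmax : max z.re 0 = 0 := max_eq_right hre.le
  have hmin : min z.re 0 = z.re := min_eq_left hre.le
  have hz0 : z ≠ 0 := fun h => hz (by simp [h])
  have hns' : 0 < Complex.normSq z := Complex.normSq_pos.2 hz0
  have hns : Complex.normSq z ≠ 0 := hns'.ne'
  refine ⟨?_, ?_, ?_⟩
  · rw [hmax, hmin]
    have hzc : (starRingEnd ℂ z) ≠ 0 := by simpa using hz0
    field_simp
    have him : ((z.im : ℝ) : ℂ) ^ 2 = -((z - starRingEnd ℂ z) / 2) ^ 2 := by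
      rw [Complex.sub_conj]
      push_cast
      have : (2 * (z.im:ℂ) * I / 2) ^ 2 = (z.im:ℂ)^2 * I^2 := by ring
      rw [this, Complex.I_sq]
      ring
    have hns2 : ((Complex.normSq z : ℝ) : ℂ) = z * starRingEnd ℂ z :=
      (Complex.mul_conj z).symm
    have hre' : ((z.re : ℝ) : ℂ) = (z + starRingEnd ℂ z) / 2 := by
      rw [Complex.add_conj]; push_cast; ring
    push_cast
    rw [him, hre', hns2]
    have hnz : z * starRingEnd ℂ z ≠ 0 := mul_ne_zero hz0 hzc
    field_simp
    ring
  · rw [hmax, hmin]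
    positivity
  · rw [hmin]
    have : 0 ≤ -2 * z.re := by linarith
    positivity
end
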